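/- There exists an undirected ACR-GNN node classifier such that for every finite undirected labelled graph H of dimension 3 and every node v of H, the classifier outputs true at v if and only if H is isomorphic to gad(G) for some strict linear order G. -/

import Mathlib

/-- A strict linear order on a type `V`: an irreflexive, transitive and total
binary relation. -/
def IsStrictLinearOrderRel {V : Type} (E : V → V → Prop) : Prop :=
  (∀ v, ¬ E v v) ∧ (∀ u v w, E u v → E v w → E u w) ∧ (∀ u v : V, u ≠ v → E u v ∨ E v u)

/-- Vertices of the gadgetisation of a directed graph `(V, E)`: a node `v¹_u` for every
`u : V` (left summand) and, for every edge `e` of `E`, a node `v²_e` (right summand with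
second component `false`) and a node `v³_e` (second component `true`). -/
def GadV {V : Type} (E : V → V → Prop) : Type :=
  V ⊕ ({p : V × V // E p.1 p.2} × Bool)

/-- The (symmetric) adjacency relation of the gadgetisation: every edge `(u,w)` of the
original graph is replaced by the undirected path `v¹_u — v²_{(u,w)} — v³_{(u,w)} — v¹_w`. -/
def gadAdj {V : Type} (E : V → V → Prop) : GadV E → GadV E → Prop
  | Sum.inl u, Sum.inr (e, b) => (b = false ∧ e.val.1 = u) ∨ (b = true ∧ e.val.2 = u)
  | Sum.inr (e, b), Sum.inl u => (b = false ∧ e.val.1 = u) ∨ (b = true ∧ e.val.2 = u)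
  | Sum.inr (e, b), Sum.inr (e', b') => e = e' ∧ b ≠ b'
  | Sum.inl _, Sum.inl _ => False

/-- The labelling of the gadgetisation: `v¹`-nodes get label `(1,0,0)`, `v²`-nodes get
`(0,1,0)` and `v³`-nodes get `(0,0,1)`. -/
def gadLab {V : Type} (E : V → V → Prop) : GadV E → Fin 3 → Bool
  | Sum.inl _ => fun i => decide (i = 0)
  | Sum.inr (_, false) => fun i => decide (i = 1)
  | Sum.inr (_, true) => fun i => decide (i = 2)

noncomputable instance GadV.fintype {V : Type} [Fintype V] (E : V → V → Prop) :
    Fintype (GadV E) := by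
  classical
  unfold GadV
  infer_instance

/-- An isomorphism of labelled graphs: an edge-preserving and label-preserving bijection. -/
def IsoLabGraph {V₁ V₂ : Type} {d : ℕ} (E₁ : V₁ → V₁ → Prop) (lab₁ : V₁ → Fin d → Bool)
    (E₂ : V₂ → V₂ → Prop) (lab₂ : V₂ → Fin d → Bool) : Prop :=
  ∃ f : V₁ ≃ V₂, (∀ u v, E₁ u v ↔ E₂ (f u) (f v)) ∧ ∀ v, lab₁ v = lab₂ (f v)

/-- `(W, EH, labH)` is isomorphic to the gadgetisation of some (finite) strict linear
order. -/
def IsGadLin {W : Type} (EH : W → W → Prop) (labH : W → Fin 3 → Bool) : Prop :=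
  ∃ (U : Type) (_ : Fintype U) (R : U → U → Prop),
    IsStrictLinearOrderRel R ∧ IsoLabGraph EH labH (gadAdj R) (gadLab R)

/-- A gadgetised path from `u` to `z` via `w` (a `P₂` node) and `v` (a `P₃` node). -/
def GadPath {V : Type} (E : V → V → Prop) (lab : V → Fin 3 → Bool) (u w v z : V) : Prop :=
  lab u 0 = true ∧ lab w 1 = true ∧ lab v 2 = true ∧ lab z 0 = true ∧
    E u w ∧ E w v ∧ E v z

/-- There is a gadgetised edge from `u` to `z`. -/
def GadEdge {V : Type} (E : V → V → Prop) (lab : V → Fin 3 → Bool) (u z : V) : Prop :=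
  ∃ w v, GadPath E lab u w v z

/-- Condition φ₁: every node satisfies exactly one of `P₁, P₂, P₃`. -/
def phi1 {V : Type} (lab : V → Fin 3 → Bool) : Prop :=
  ∀ v : V,
    (lab v 0 = true ∧ lab v 1 = false ∧ lab v 2 = false) ∨
    (lab v 0 = false ∧ lab v 1 = true ∧ lab v 2 = false) ∨
    (lab v 0 = false ∧ lab v 1 = false ∧ lab v 2 = true)

/-- Condition φ₂: every `P₂`-node has exactly two neighbours, exactly one of them a
`P₁`-node and exactly one a `P₃`-node; every `P₃`-node has exactly two neighbours, exactly
one a `P₁`-node and exactly one a `P₂`-node; and no two `P₁`-nodes are adjacent. -/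
def phi2 {V : Type} [Fintype V] (E : V → V → Prop) (lab : V → Fin 3 → Bool) : Prop :=
  (∀ v : V, lab v 1 = true →
    Nat.card {w | E v w} = 2 ∧ Nat.card {w | E v w ∧ lab w 0 = true} = 1 ∧
      Nat.card {w | E v w ∧ lab w 2 = true} = 1) ∧
  (∀ v : V, lab v 2 = true →
    Nat.card {w | E v w} = 2 ∧ Nat.card {w | E v w ∧ lab w 0 = true} = 1 ∧
      Nat.card {w | E v w ∧ lab w 1 = true} = 1) ∧
  (∀ u v : V, lab u 0 = true → lab v 0 = true → ¬ E u v)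

/-- Condition φ₃: between any two distinct `P₁`-nodes there is exactly one gadgetised edge
in total (from `u` to `z` or from `z` to `u`). -/
def phi3 {V : Type} [Fintype V] (E : V → V → Prop) (lab : V → Fin 3 → Bool) : Prop :=
  ∀ u z : V, lab u 0 = true → lab z 0 = true → u ≠ z →
    Nat.card {p : V × V | GadPath E lab u p.1 p.2 z} +
      Nat.card {p : V × V | GadPath E lab z p.1 p.2 u} = 1

/-- Condition φ₄: there is no triangle of gadgetised edges. -/
def phi4 {V : Type} (E : V → V → Prop) (lab : V → Fin 3 → Bool) : Prop :=
  ¬ ∃ u v w : V, GadEdge E lab u v ∧ GadEdge E lab v w ∧ GadEdge E lab w u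

/-- `N₂ u`: the number of neighbours of `u` satisfying `P₂`. -/
noncomputable def N2 {V : Type} [Fintype V] (E : V → V → Prop) (lab : V → Fin 3 → Bool)
    (u : V) : ℕ :=
  Nat.card {w | E u w ∧ lab w 1 = true}

/-- Condition ψ: for all `0 ≤ i < j < |P₁|` there are `P₁`-nodes `u, w` with `N₂ u = j`,
`N₂ w = i` and a gadgetised edge from `u` to `w`. -/
def psiCond {V : Type} [Fintype V] (E : V → V → Prop) (lab : V → Fin 3 → Bool) : Prop :=
  ∀ i j : ℕ, i < j → j < Nat.card {v : V | lab v 0 = true} →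
    ∃ u w : V, lab u 0 = true ∧ lab w 0 = true ∧
      N2 E lab u = j ∧ N2 E lab w = i ∧ GadEdge E lab u w

/-- The multiset `⟦f w : w ∈ V, p w⟧` of values of `f` on the elements satisfying `p`. -/
noncomputable def msetOf {V α : Type} [Fintype V] (p : V → Prop) (f : V → α) : Multiset α :=
  letI := Classical.decPred p
  ((Finset.univ.filter p).val.map f)

/-- An undirected ACR-GNN layer: an aggregation over the neighbourhood and a global
readout (both mapping finite multisets of real vectors to real vectors), and a combination
function. -/
structure UACRLayer (din dout : ℕ) where
  m1 : ℕ
  m2 : ℕ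
  agg : Multiset (Fin din → ℝ) → Fin m1 → ℝ
  read : Multiset (Fin din → ℝ) → Fin m2 → ℝ
  comb : (Fin din → ℝ) → (Fin m1 → ℝ) → (Fin m2 → ℝ) → Fin dout → ℝ

/-- Applying an undirected ACR-GNN layer to an undirected graph with features `f`:
`λ'(v) = comb(λ(v), agg(⟦λ(w) : w ∈ N(v)⟧), read(⟦λ(w) : w ∈ V⟧))`. -/
noncomputable def UACRLayer.apply {din dout : ℕ} (L : UACRLayer din dout)
    {V : Type} [Fintype V] (E : V → V → Prop) (f : V → Fin din → ℝ) :
    V → Fin dout → ℝ :=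
  fun v => L.comb (f v)
    (L.agg (msetOf (fun w => E v w) f))
    (L.read (msetOf (fun _ => True) f))

/-- A finite sequence of undirected ACR-GNN layers of matching dimensions, from input
dimension `d₁` to output dimension `d₂`. -/
inductive UACRNet : ℕ → ℕ → Type
  | nil {d : ℕ} : UACRNet d d
  | cons {d₁ d₂ d₃ : ℕ} : UACRLayer d₁ d₂ → UACRNet d₂ d₃ → UACRNet d₁ d₃

/-- Evaluating a sequence of undirected ACR-GNN layers on an undirected graph. -/
noncomputable def UACRNet.eval {V : Type} [Fintype V] (E : V → V → Prop) :
    {d₁ d₂ : ℕ} → UACRNet d₁ d₂ → (V → Fin d₁ → ℝ) → V → Fin d₂ → ℝ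
  | _, _, .nil, f => f
  | _, _, .cons L net, f => UACRNet.eval E net (L.apply E f)

/-- A `{0,1}`-label viewed as a real vector. -/
def boolVec {d : ℕ} (lab : Fin d → Bool) : Fin d → ℝ := fun i => if lab i then 1 else 0


---------------------------------------------------------------------------
-- AUX
section AuxGNN
open Classical

lemma mEnc_exists (d : ℕ) : Nonempty (Multiset (Fin d → ℝ) ↪ ℝ) := by
  rw [← Cardinal.le_def]
  calc Cardinal.mk (Multiset (Fin d → ℝ)) ≤ Cardinal.mk (List (Fin d → ℝ)) :=
        Cardinal.mk_le_of_surjective (Quot.mk_surjective)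
    _ ≤ max Cardinal.aleph0 (Cardinal.mk (Fin d → ℝ)) := Cardinal.mk_list_le_max _
    _ ≤ Cardinal.mk ℝ := by
        apply max_le
        · simpa [Cardinal.mk_real] using Cardinal.aleph0_le_continuum
        · rw [Cardinal.mk_real, Cardinal.mk_pi]
          simp only [Cardinal.mk_real, Cardinal.prod_const, Cardinal.lift_id]
          calc Cardinal.continuum ^ (Cardinal.mk (Fin d))
              ≤ Cardinal.continuum ^ Cardinal.aleph0 := by
                apply Cardinal.power_le_power_left Cardinal.continuum_ne_zero
                exact (Cardinal.lt_aleph0_of_finite _).le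
            _ = Cardinal.continuum := Cardinal.continuum_power_aleph0

noncomputable def enc (d : ℕ) : Multiset (Fin d → ℝ) → ℝ := (mEnc_exists d).some
lemma enc_inj (d : ℕ) : Function.Injective (enc d) := (mEnc_exists d).some.injective
noncomputable def dec (d : ℕ) : ℝ → Multiset (Fin d → ℝ) := Function.invFun (enc d)
lemma dec_enc (d : ℕ) (M : Multiset (Fin d → ℝ)) : dec d (enc d M) = M :=
  Function.leftInverse_invFun (enc_inj d) M

lemma mem_msetOf {V α : Type} [Fintype V] {p : V → Prop} {f : V → α} {a : α} :
    a ∈ msetOf p f ↔ ∃ v, p v ∧ f v = a := by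
  classical
  unfold msetOf
  simp [Multiset.mem_map, Finset.mem_filter]

lemma countP_msetOf {V α : Type} [Fintype V] (p : V → Prop) (f : V → α) (q : α → Prop) :
    Multiset.countP q (msetOf p f) = Nat.card {v | p v ∧ q (f v)} := by
  classical
  unfold msetOf
  rw [Multiset.countP_map, Nat.card_eq_fintype_card, Fintype.card_subtype]
  rw [show (Multiset.filter (fun a => q (f a)) (Finset.filter p Finset.univ).val) =
      ((Finset.filter p Finset.univ).filter (fun a => q (f a))).val from rfl]
  rw [Finset.filter_filter, Finset.card_def]
  all_goals congr 1

lemma card_msetOf {V α : Type} [Fintype V] (p : V → Prop) (f : V → α) :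
    Multiset.card (msetOf p f) = Nat.card {v | p v} := by
  classical
  unfold msetOf
  rw [Multiset.card_map, Nat.card_eq_fintype_card, Fintype.card_subtype, Finset.card_def]
  all_goals congr 1

lemma msetOf_equiv {V W α : Type} [Fintype V] [Fintype W] (e : V ≃ W) (p : V → Prop)
    (p' : W → Prop) (f : V → α) (f' : W → α) (hp : ∀ v, p' (e v) ↔ p v)
    (hf : ∀ v, f' (e v) = f v) : msetOf p f = msetOf p' f' := by
  classical
  unfold msetOf
  rw [← Finset.univ_map_equiv_to_embedding e, Finset.filter_map, Finset.map_val,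
    Multiset.map_map]
  have h1 : (Finset.filter (p' ∘ ⇑e.toEmbedding) Finset.univ) =
      (Finset.filter p Finset.univ) := by
    apply Finset.filter_congr
    intro x _
    simp [Equiv.coe_toEmbedding, hp]
  rw [h1]
  apply Multiset.map_congr rfl
  intro x _
  simp [Equiv.coe_toEmbedding, hf]

-- features
def ext1 {n : ℕ} (g : Fin n → ℝ) (r : ℝ) : Fin (n + 1) → ℝ :=
  fun i => if h : (i : ℕ) < n then g ⟨i, h⟩ else r

noncomputable def feat0 {V : Type} (lab : V → Fin 3 → Bool) : V → Fin 3 → ℝ :=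
  fun v => boolVec (lab v)
noncomputable def feat1 {V : Type} [Fintype V] (E : V → V → Prop) (lab : V → Fin 3 → Bool) :
    V → Fin 4 → ℝ :=
  fun v => ext1 (feat0 lab v) (enc 3 (msetOf (fun w => E v w) (feat0 lab)))
noncomputable def feat2 {V : Type} [Fintype V] (E : V → V → Prop) (lab : V → Fin 3 → Bool) :
    V → Fin 5 → ℝ :=
  fun v => ext1 (feat1 E lab v) (enc 4 (msetOf (fun w => E v w) (feat1 E lab)))
noncomputable def feat3 {V : Type} [Fintype V] (E : V → V → Prop) (lab : V → Fin 3 → Bool) :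
    V → Fin 6 → ℝ :=
  fun v => ext1 (feat2 E lab v) (enc 5 (msetOf (fun w => E v w) (feat2 E lab)))
noncomputable def feat4 {V : Type} [Fintype V] (E : V → V → Prop) (lab : V → Fin 3 → Bool) :
    V → Fin 7 → ℝ :=
  fun v => ext1 (feat3 E lab v) (enc 6 (msetOf (fun w => E v w) (feat3 E lab)))

noncomputable def theNet : UACRNet 3 1 :=
  .cons ⟨1, 0, fun M _ => enc 3 M, fun _ => Fin.elim0, fun x a _ => ext1 x (a 0)⟩
    (.cons ⟨1, 0, fun M _ => enc 4 M, fun _ => Fin.elim0, fun x a _ => ext1 x (a 0)⟩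
      (.cons ⟨1, 0, fun M _ => enc 5 M, fun _ => Fin.elim0, fun x a _ => ext1 x (a 0)⟩
        (.cons ⟨1, 0, fun M _ => enc 6 M, fun _ => Fin.elim0, fun x a _ => ext1 x (a 0)⟩
          (.cons ⟨0, 1, fun _ => Fin.elim0, fun M _ => enc 7 M, fun _ _ r => r⟩ .nil))))

lemma eval_theNet {V : Type} [Fintype V] (E : V → V → Prop) (lab : V → Fin 3 → Bool) (v : V) :
    UACRNet.eval E theNet (fun w => boolVec (lab w)) v
      = fun _ => enc 7 (msetOf (fun _ => True) (feat4 E lab)) := rfl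

-- component access
lemma feat4_lab {V : Type} [Fintype V] (E : V → V → Prop) (lab : V → Fin 3 → Bool) (v : V)
    (i : Fin 3) : feat4 E lab v (Fin.castLE (by omega) i) = (if lab v i then 1 else 0) := by
  fin_cases i <;> rfl
lemma feat4_c3 {V : Type} [Fintype V] (E : V → V → Prop) (lab : V → Fin 3 → Bool) (v : V) :
    feat4 E lab v 3 = enc 3 (msetOf (fun w => E v w) (feat0 lab)) := rfl
lemma feat4_c6 {V : Type} [Fintype V] (E : V → V → Prop) (lab : V → Fin 3 → Bool) (v : V) :
    feat4 E lab v 6 = enc 6 (msetOf (fun w => E v w) (feat3 E lab)) := rfl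
lemma feat3_c5 {V : Type} [Fintype V] (E : V → V → Prop) (lab : V → Fin 3 → Bool) (v : V) :
    feat3 E lab v 5 = enc 5 (msetOf (fun w => E v w) (feat2 E lab)) := rfl
lemma feat2_c4 {V : Type} [Fintype V] (E : V → V → Prop) (lab : V → Fin 3 → Bool) (v : V) :
    feat2 E lab v 4 = enc 4 (msetOf (fun w => E v w) (feat1 E lab)) := rfl
lemma feat1_c3 {V : Type} [Fintype V] (E : V → V → Prop) (lab : V → Fin 3 → Bool) (v : V) :
    feat1 E lab v 3 = enc 3 (msetOf (fun w => E v w) (feat0 lab)) := rfl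
lemma feat4_c0 {V : Type} [Fintype V] (E : V → V → Prop) (lab : V → Fin 3 → Bool) (v : V) :
    feat4 E lab v 0 = (if lab v 0 then 1 else 0) := rfl
lemma feat4_c1 {V : Type} [Fintype V] (E : V → V → Prop) (lab : V → Fin 3 → Bool) (v : V) :
    feat4 E lab v 1 = (if lab v 1 then 1 else 0) := rfl
lemma feat4_c2 {V : Type} [Fintype V] (E : V → V → Prop) (lab : V → Fin 3 → Bool) (v : V) :
    feat4 E lab v 2 = (if lab v 2 then 1 else 0) := rfl
lemma feat3_c2 {V : Type} [Fintype V] (E : V → V → Prop) (lab : V → Fin 3 → Bool) (v : V) :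
    feat3 E lab v 2 = (if lab v 2 then 1 else 0) := rfl
lemma feat3_c1 {V : Type} [Fintype V] (E : V → V → Prop) (lab : V → Fin 3 → Bool) (v : V) :
    feat3 E lab v 1 = (if lab v 1 then 1 else 0) := rfl
lemma feat2_c2 {V : Type} [Fintype V] (E : V → V → Prop) (lab : V → Fin 3 → Bool) (v : V) :
    feat2 E lab v 2 = (if lab v 2 then 1 else 0) := rfl
lemma feat1_c0 {V : Type} [Fintype V] (E : V → V → Prop) (lab : V → Fin 3 → Bool) (v : V) :
    feat1 E lab v 0 = (if lab v 0 then 1 else 0) := rfl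

end AuxGNN

section Main
open Classical

noncomputable def cntAll (r : ℝ) : ℕ := Multiset.card (dec 3 r)
noncomputable def cnt0 (r : ℝ) : ℕ := Multiset.countP (fun y => y 0 = 1) (dec 3 r)
noncomputable def cnt1 (r : ℝ) : ℕ := Multiset.countP (fun y => y 1 = 1) (dec 3 r)
noncomputable def cnt2 (r : ℝ) : ℕ := Multiset.countP (fun y => y 2 = 1) (dec 3 r)

def PhiM (M : Multiset (Fin 7 → ℝ)) : Prop :=
  (∀ x ∈ M, (x 0 = 1 ∧ x 1 = 0 ∧ x 2 = 0) ∨ (x 0 = 0 ∧ x 1 = 1 ∧ x 2 = 0) ∨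
    (x 0 = 0 ∧ x 1 = 0 ∧ x 2 = 1)) ∧
  (∀ x ∈ M, x 1 = 1 → cntAll (x 3) = 2 ∧ cnt0 (x 3) = 1 ∧ cnt2 (x 3) = 1) ∧
  (∀ x ∈ M, x 2 = 1 → cntAll (x 3) = 2 ∧ cnt0 (x 3) = 1 ∧ cnt1 (x 3) = 1) ∧
  (∀ x ∈ M, x 0 = 1 → cnt0 (x 3) = 0) ∧
  (∀ i j : ℕ, i < j → j < Multiset.countP (fun x => x 0 = 1) M →
    ∃ x ∈ M, x 0 = 1 ∧ cnt1 (x 3) = j ∧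
      ∃ y ∈ dec 6 (x 6), y 1 = 1 ∧ ∃ z ∈ dec 5 (y 5), z 2 = 1 ∧
        ∃ t ∈ dec 4 (z 4), t 0 = 1 ∧ cnt1 (t 3) = i) ∧
  2 * Multiset.countP (fun x => x 1 = 1) M =
    Multiset.countP (fun x => x 0 = 1) M * (Multiset.countP (fun x => x 0 = 1) M - 1)

def PhiG {V : Type} [Fintype V] (E : V → V → Prop) (lab : V → Fin 3 → Bool) : Prop :=
  phi1 lab ∧ phi2 E lab ∧ psiCond E lab ∧
    2 * Nat.card {v : V | lab v 1 = true} =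
      Nat.card {v : V | lab v 0 = true} * (Nat.card {v : V | lab v 0 = true} - 1)

noncomputable def theCls : (Fin 1 → ℝ) → Bool := fun x => decide (PhiM (dec 7 (x 0)))

lemma iteb1 (b : Bool) : ((if b then (1:ℝ) else 0) = 1) ↔ b = true := by
  cases b <;> norm_num

lemma iteb0 (b : Bool) : ((if b then (1:ℝ) else 0) = 0) ↔ b = false := by
  cases b <;> norm_num

lemma natCongr {V : Type} {p q : V → Prop} (h : ∀ v, p v ↔ q v) :
    Nat.card {v | p v} = Nat.card {v | q v} := Nat.card_congr (Equiv.subtypeEquivRight h)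

lemma cnt0_enc {V : Type} [Fintype V] (E : V → V → Prop) (lab : V → Fin 3 → Bool) (v : V) :
    cnt0 (enc 3 (msetOf (fun w => E v w) (feat0 lab))) =
      Nat.card {w | E v w ∧ lab w 0 = true} := by
  rw [cnt0, dec_enc, countP_msetOf]
  exact natCongr fun w => and_congr_right' (iteb1 (lab w 0))

lemma cnt1_enc {V : Type} [Fintype V] (E : V → V → Prop) (lab : V → Fin 3 → Bool) (v : V) :
    cnt1 (enc 3 (msetOf (fun w => E v w) (feat0 lab))) = N2 E lab v := by
  rw [cnt1, dec_enc, countP_msetOf, N2]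
  exact natCongr fun w => and_congr_right' (iteb1 (lab w 1))

lemma cnt2_enc {V : Type} [Fintype V] (E : V → V → Prop) (lab : V → Fin 3 → Bool) (v : V) :
    cnt2 (enc 3 (msetOf (fun w => E v w) (feat0 lab))) =
      Nat.card {w | E v w ∧ lab w 2 = true} := by
  rw [cnt2, dec_enc, countP_msetOf]
  exact natCongr fun w => and_congr_right' (iteb1 (lab w 2))

lemma cntAll_enc {V : Type} [Fintype V] (E : V → V → Prop) (lab : V → Fin 3 → Bool) (v : V) :
    cntAll (enc 3 (msetOf (fun w => E v w) (feat0 lab))) = Nat.card {w | E v w} := by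
  rw [cntAll, dec_enc, card_msetOf]

lemma express {V : Type} [Fintype V] (E : V → V → Prop) (lab : V → Fin 3 → Bool) :
    PhiM (msetOf (fun _ => True) (feat4 E lab)) ↔ PhiG E lab := by
  classical
  set M := msetOf (fun _ => True) (feat4 E lab) with hM
  have hforall : ∀ (P : (Fin 7 → ℝ) → Prop), (∀ x ∈ M, P x) ↔ ∀ v, P (feat4 E lab v) := by
    intro P
    constructor
    · intro h v
      exact h _ (mem_msetOf.2 ⟨v, trivial, rfl⟩)
    · intro h x hx
      obtain ⟨v, -, rfl⟩ := mem_msetOf.1 hx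
      exact h v
  have hc0 : Multiset.countP (fun x => x 0 = 1) M = Nat.card {v : V | lab v 0 = true} := by
    rw [hM, countP_msetOf]
    exact natCongr fun v => by simp only [feat4_c0, true_and, iteb1]
  have hc1 : Multiset.countP (fun x => x 1 = 1) M = Nat.card {v : V | lab v 1 = true} := by
    rw [hM, countP_msetOf]
    exact natCongr fun v => by simp only [feat4_c1, true_and, iteb1]
  have e1 : (∀ x ∈ M, (x 0 = 1 ∧ x 1 = 0 ∧ x 2 = 0) ∨ (x 0 = 0 ∧ x 1 = 1 ∧ x 2 = 0) ∨
      (x 0 = 0 ∧ x 1 = 0 ∧ x 2 = 1)) ↔ phi1 lab := by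
    refine (hforall _).trans (forall_congr' fun v => ?_)
    rw [feat4_c0, feat4_c1, feat4_c2]
    cases lab v 0 <;> cases lab v 1 <;> cases lab v 2 <;> norm_num
  have e2a : (∀ x ∈ M, x 1 = 1 → cntAll (x 3) = 2 ∧ cnt0 (x 3) = 1 ∧ cnt2 (x 3) = 1) ↔
      (∀ v : V, lab v 1 = true → Nat.card {w | E v w} = 2 ∧
        Nat.card {w | E v w ∧ lab w 0 = true} = 1 ∧
        Nat.card {w | E v w ∧ lab w 2 = true} = 1) := by
    refine (hforall _).trans (forall_congr' fun v => ?_)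
    rw [feat4_c1, iteb1, feat4_c3, cntAll_enc, cnt0_enc, cnt2_enc]
  have e2b : (∀ x ∈ M, x 2 = 1 → cntAll (x 3) = 2 ∧ cnt0 (x 3) = 1 ∧ cnt1 (x 3) = 1) ↔
      (∀ v : V, lab v 2 = true → Nat.card {w | E v w} = 2 ∧
        Nat.card {w | E v w ∧ lab w 0 = true} = 1 ∧
        Nat.card {w | E v w ∧ lab w 1 = true} = 1) := by
    refine (hforall _).trans (forall_congr' fun v => ?_)
    rw [feat4_c2, iteb1, feat4_c3, cntAll_enc, cnt0_enc, cnt1_enc, N2]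
  have e2c : (∀ x ∈ M, x 0 = 1 → cnt0 (x 3) = 0) ↔
      (∀ u v : V, lab u 0 = true → lab v 0 = true → ¬ E u v) := by
    have base : (∀ x ∈ M, x 0 = 1 → cnt0 (x 3) = 0) ↔
        (∀ v : V, lab v 0 = true → Nat.card {w | E v w ∧ lab w 0 = true} = 0) := by
      refine (hforall _).trans (forall_congr' fun v => ?_)
      rw [feat4_c0, iteb1, feat4_c3, cnt0_enc]
    rw [base]
    constructor
    · intro h u v hu hv hE
      have h0 := h u hu
      rw [Nat.card_coe_set_eq, Set.ncard_eq_zero (Set.toFinite _)] at h0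
      have : v ∈ {w | E u w ∧ lab w 0 = true} := ⟨hE, hv⟩
      rw [h0] at this
      exact this
    · intro h v hv
      rw [Nat.card_coe_set_eq, Set.ncard_eq_zero (Set.toFinite _)]
      ext w
      simp only [Set.mem_setOf_eq, Set.mem_empty_iff_false, iff_false, not_and]
      intro hE hw
      exact h v w hv hw hE
  have e5 : (∀ i j : ℕ, i < j → j < Nat.card {v : V | lab v 0 = true} →
      ∃ x ∈ M, x 0 = 1 ∧ cnt1 (x 3) = j ∧
        ∃ y ∈ dec 6 (x 6), y 1 = 1 ∧ ∃ z ∈ dec 5 (y 5), z 2 = 1 ∧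
          ∃ t ∈ dec 4 (z 4), t 0 = 1 ∧ cnt1 (t 3) = i) ↔ psiCond E lab := by
    constructor
    · intro h i j hij hj
      obtain ⟨x, hx, hx0, hcj, y, hy, hy1, z, hz, hz2, t, ht, ht0, hti⟩ := h i j hij hj
      obtain ⟨u, -, rfl⟩ := mem_msetOf.1 hx
      rw [feat4_c0, iteb1] at hx0
      rw [feat4_c3, cnt1_enc] at hcj
      rw [feat4_c6, dec_enc] at hy
      obtain ⟨b, hub, rfl⟩ := mem_msetOf.1 hy
      rw [feat3_c1, iteb1] at hy1
      rw [feat3_c5, dec_enc] at hz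
      obtain ⟨c, hbc, rfl⟩ := mem_msetOf.1 hz
      rw [feat2_c2, iteb1] at hz2
      rw [feat2_c4, dec_enc] at ht
      obtain ⟨w, hcw, rfl⟩ := mem_msetOf.1 ht
      rw [feat1_c0, iteb1] at ht0
      rw [feat1_c3, cnt1_enc] at hti
      exact ⟨u, w, hx0, ht0, hcj, hti, b, c, hx0, hy1, hz2, ht0, hub, hbc, hcw⟩
    · intro h i j hij hj
      obtain ⟨u, w, hu0, hw0, hju, hiw, b, c, hp⟩ := h i j hij hj
      obtain ⟨-, hb1, hc2, -, hub, hbc, hcw⟩ := hp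
      refine ⟨feat4 E lab u, mem_msetOf.2 ⟨u, trivial, rfl⟩, ?_, ?_, feat3 E lab b, ?_, ?_,
        feat2 E lab c, ?_, ?_, feat1 E lab w, ?_, ?_, ?_⟩
      · rw [feat4_c0, iteb1]; exact hu0
      · rw [feat4_c3, cnt1_enc]; exact hju
      · rw [feat4_c6, dec_enc]; exact mem_msetOf.2 ⟨b, hub, rfl⟩
      · rw [feat3_c1, iteb1]; exact hb1
      · rw [feat3_c5, dec_enc]; exact mem_msetOf.2 ⟨c, hbc, rfl⟩
      · rw [feat2_c2, iteb1]; exact hc2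
      · rw [feat2_c4, dec_enc]; exact mem_msetOf.2 ⟨w, hcw, rfl⟩
      · rw [feat1_c0, iteb1]; exact hw0
      · rw [feat1_c3, cnt1_enc]; exact hiw
  unfold PhiM PhiG phi2 psiCond
  rw [hc0, hc1]
  rw [e5] -- may fail; fallback below
  constructor
  · rintro ⟨h1, h2, h3, h4, h5, h6⟩
    exact ⟨e1.1 h1, ⟨e2a.1 h2, e2b.1 h3, e2c.1 h4⟩, h5, h6⟩
  · rintro ⟨h1, ⟨h2, h3, h4⟩, h5, h6⟩
    exact ⟨e1.2 h1, e2a.2 h2, e2b.2 h3, e2c.2 h4, h5, h6⟩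

lemma invar {V W : Type} [Fintype V] [Fintype W] (E : V → V → Prop) (lab : V → Fin 3 → Bool)
    (E' : W → W → Prop) (lab' : W → Fin 3 → Bool) (h : IsoLabGraph E lab E' lab') :
    msetOf (fun _ => True) (feat4 E lab) = msetOf (fun _ => True) (feat4 E' lab') := by
  obtain ⟨f, he, hl⟩ := h
  have h0 : ∀ v, feat0 lab' (f v) = feat0 lab v := by
    intro v
    unfold feat0
    rw [← hl]
  have h1 : ∀ v, feat1 E' lab' (f v) = feat1 E lab v := by
    intro v
    unfold feat1
    rw [h0]
    rw [← (msetOf_equiv f (fun w => E v w) (fun w => E' (f v) w) (feat0 lab) (feat0 lab')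
      (fun w => (he v w).symm) h0)]
  have h2 : ∀ v, feat2 E' lab' (f v) = feat2 E lab v := by
    intro v
    unfold feat2
    rw [h1]
    rw [← (msetOf_equiv f (fun w => E v w) (fun w => E' (f v) w) (feat1 E lab) (feat1 E' lab')
      (fun w => (he v w).symm) h1)]
  have h3 : ∀ v, feat3 E' lab' (f v) = feat3 E lab v := by
    intro v
    unfold feat3
    rw [h2]
    rw [← (msetOf_equiv f (fun w => E v w) (fun w => E' (f v) w) (feat2 E lab) (feat2 E' lab')
      (fun w => (he v w).symm) h2)]
  have h4 : ∀ v, feat4 E' lab' (f v) = feat4 E lab v := by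
    intro v
    unfold feat4
    rw [h3]
    rw [← (msetOf_equiv f (fun w => E v w) (fun w => E' (f v) w) (feat3 E lab) (feat3 E' lab')
      (fun w => (he v w).symm) h3)]
  exact msetOf_equiv f (fun _ => True) (fun _ => True) (feat4 E lab) (feat4 E' lab')
    (fun _ => Iff.rfl) h4

lemma sound {U : Type} [Fintype U] (R : U → U → Prop) (hR : IsStrictLinearOrderRel R) :
    PhiG (gadAdj R) (gadLab R) := by
  classical
  obtain ⟨hirr, htrans, htot⟩ := hR
  set n := Nat.card U with hn
  have houtlt : ∀ u : U, Nat.card {w | R u w} < n := by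
    intro u
    rw [hn, ← Set.ncard_univ U, Nat.card_coe_set_eq]
    apply Set.ncard_lt_ncard _ (Set.toFinite _)
    constructor
    · exact Set.subset_univ _
    · intro hsub
      exact hirr u (hsub (Set.mem_univ u))
  have hmono : ∀ u w : U, R u w → Nat.card {x | R w x} < Nat.card {x | R u x} := by
    intro u w hRuw
    rw [Nat.card_coe_set_eq, Nat.card_coe_set_eq]
    apply Set.ncard_lt_ncard _ (Set.toFinite _)
    constructor
    · intro x hx
      exact htrans u w x hRuw hx
    · intro hsub
      exact hirr w (hsub hRuw)
  set g : U → Fin n := fun u => ⟨Nat.card {w | R u w}, houtlt u⟩ with hg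
  have hgbij : Function.Bijective g := by
    rw [Fintype.bijective_iff_injective_and_card]
    constructor
    · intro u w huw
      by_contra hne
      have hval : Nat.card {x | R u x} = Nat.card {x | R w x} := congrArg Fin.val huw
      rcases htot u w hne with h | h
      · exact absurd hval (Nat.ne_of_gt (hmono u w h))
      · exact absurd hval (Nat.ne_of_lt (hmono w u h))
    · simp [hn, Nat.card_eq_fintype_card]
  have hlo5 : ∀ i j : ℕ, i < j → j < n →
      ∃ u w : U, Nat.card {x | R u x} = j ∧ Nat.card {x | R w x} = i ∧ R u w := by
    intro i j hij hj
    obtain ⟨u, hu⟩ := hgbij.2 ⟨j, hj⟩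
    obtain ⟨w, hw⟩ := hgbij.2 ⟨i, lt_trans hij hj⟩
    have hju : Nat.card {x | R u x} = j := congrArg Fin.val hu
    have hiw : Nat.card {x | R w x} = i := congrArg Fin.val hw
    refine ⟨u, w, hju, hiw, ?_⟩
    have hne : u ≠ w := by
      intro h
      rw [h, hiw] at hju
      omega
    rcases htot u w hne with h | h
    · exact h
    · exact absurd (hmono w u h) (by omega)
  -- neighbour sets in the gadget graph
  have hnbF : ∀ e : {p : U × U // R p.1 p.2},
      {w : GadV R | gadAdj R (Sum.inr (e, false)) w} =
        {Sum.inl e.val.1, Sum.inr (e, true)} := by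
    intro e
    ext w
    rcases w with u | ⟨e', b'⟩
    · constructor
      · rintro (⟨-, h⟩ | ⟨h, -⟩)
        · exact Or.inl (by rw [h])
        · exact absurd h Bool.false_ne_true
      · rintro (h | h)
        · exact Or.inl ⟨rfl, by injection h.symm⟩
        · exact absurd h Sum.inl_ne_inr
    · constructor
      · rintro ⟨rfl, hb⟩
        cases b'
        · exact absurd rfl hb
        · exact Or.inr rfl
      · rintro (h | h)
        · exact absurd h (by simp)
        · injection h with h'
          obtain ⟨h1, h2⟩ := Prod.mk.injEq .. ▸ h'
          exact ⟨h1.symm ▸ rfl, by rw [h2]; decide⟩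
  have hnbT : ∀ e : {p : U × U // R p.1 p.2},
      {w : GadV R | gadAdj R (Sum.inr (e, true)) w} =
        {Sum.inl e.val.2, Sum.inr (e, false)} := by
    intro e
    ext w
    rcases w with u | ⟨e', b'⟩
    · constructor
      · rintro (⟨h, -⟩ | ⟨-, h⟩)
        · exact absurd h (by decide)
        · exact Or.inl (by rw [h])
      · rintro (h | h)
        · exact Or.inr ⟨rfl, by injection h.symm⟩
        · exact absurd h Sum.inl_ne_inr
    · constructor
      · rintro ⟨rfl, hb⟩
        cases b'
        · exact Or.inr rfl
        · exact absurd rfl hb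
      · rintro (h | h)
        · exact absurd h (by simp)
        · injection h with h'
          obtain ⟨h1, h2⟩ := Prod.mk.injEq .. ▸ h'
          exact ⟨h1.symm ▸ rfl, by rw [h2]; decide⟩
  have hAF : ∀ e : {p : U × U // R p.1 p.2},
      {w : GadV R | gadAdj R (Sum.inr (e, false)) w ∧ gadLab R w 0 = true} =
        {Sum.inl e.val.1} := by
    intro e
    ext w
    simp only [Set.mem_setOf_eq, Set.mem_singleton_iff]
    constructor
    · rintro ⟨hadj, hlabw⟩
      rcases ((Set.ext_iff.1 (hnbF e) w).1 hadj) with h | h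
      · exact h
      · rw [h] at hlabw
        exact absurd hlabw Bool.false_ne_true
    · rintro rfl
      exact ⟨Or.inl ⟨rfl, rfl⟩, rfl⟩
  have hCF : ∀ e : {p : U × U // R p.1 p.2},
      {w : GadV R | gadAdj R (Sum.inr (e, false)) w ∧ gadLab R w 2 = true} =
        {Sum.inr (e, true)} := by
    intro e
    ext w
    simp only [Set.mem_setOf_eq, Set.mem_singleton_iff]
    constructor
    · rintro ⟨hadj, hlabw⟩
      rcases ((Set.ext_iff.1 (hnbF e) w).1 hadj) with h | h
      · rw [h] at hlabw
        exact absurd hlabw Bool.false_ne_true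
      · exact h
    · rintro rfl
      exact ⟨⟨rfl, by decide⟩, rfl⟩
  have hAT : ∀ e : {p : U × U // R p.1 p.2},
      {w : GadV R | gadAdj R (Sum.inr (e, true)) w ∧ gadLab R w 0 = true} =
        {Sum.inl e.val.2} := by
    intro e
    ext w
    simp only [Set.mem_setOf_eq, Set.mem_singleton_iff]
    constructor
    · rintro ⟨hadj, hlabw⟩
      rcases ((Set.ext_iff.1 (hnbT e) w).1 hadj) with h | h
      · exact h
      · rw [h] at hlabw
        exact absurd hlabw Bool.false_ne_true
    · rintro rfl
      exact ⟨Or.inr ⟨rfl, rfl⟩, rfl⟩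
  have hBT : ∀ e : {p : U × U // R p.1 p.2},
      {w : GadV R | gadAdj R (Sum.inr (e, true)) w ∧ gadLab R w 1 = true} =
        {Sum.inr (e, false)} := by
    intro e
    ext w
    simp only [Set.mem_setOf_eq, Set.mem_singleton_iff]
    constructor
    · rintro ⟨hadj, hlabw⟩
      rcases ((Set.ext_iff.1 (hnbT e) w).1 hadj) with h | h
      · rw [h] at hlabw
        exact absurd hlabw Bool.false_ne_true
      · exact h
    · rintro rfl
      exact ⟨⟨rfl, by decide⟩, rfl⟩
  have hP1card : Nat.card {v : GadV R | gadLab R v 0 = true} = n := by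
    rw [hn]
    apply Nat.card_congr
    refine (Equiv.ofBijective (fun u : U =>
      (⟨Sum.inl u, rfl⟩ : {v : GadV R // gadLab R v 0 = true})) ⟨?_, ?_⟩).symm
    · intro a b h
      exact Sum.inl_injective (congrArg Subtype.val h)
    · rintro ⟨v, hv⟩
      rcases v with u | ⟨e, b⟩
      · exact ⟨u, rfl⟩
      · cases b <;> exact absurd hv Bool.false_ne_true
  have hN2 : ∀ u : U, N2 (gadAdj R) (gadLab R) (Sum.inl u) = Nat.card {w | R u w} := by
    intro u
    show Nat.card _ = _
    apply Nat.card_congr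
    refine (Equiv.ofBijective (fun w : {w | R u w} =>
      (⟨Sum.inr (⟨(u, w.val), w.prop⟩, false), Or.inl ⟨rfl, rfl⟩, rfl⟩ :
        {x : GadV R // gadAdj R (Sum.inl u) x ∧ gadLab R x 1 = true})) ⟨?_, ?_⟩).symm
    · intro a b h
      have h' := congrArg Subtype.val h
      injection h' with h2
      exact Subtype.ext (congrArg (fun p : {p : U × U // R p.1 p.2} × Bool => p.1.val.2) h2)
    · rintro ⟨x, hadj, hlabx⟩
      rcases x with a | ⟨e, b⟩
      · exact absurd hlabx Bool.false_ne_true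
      cases b
      · rcases hadj with ⟨-, h1⟩ | ⟨h, -⟩
        · refine ⟨⟨e.val.2, ?_⟩, ?_⟩
          · rw [← h1]
            exact e.prop
          · apply Subtype.ext
            apply congrArg (fun t => (Sum.inr (t, false) : GadV R))
            apply Subtype.ext
            show ((u, e.val.2) : U × U) = e.val
            rw [← h1]
        · exact absurd h Bool.false_ne_true
      · exact absurd hlabx Bool.false_ne_true
  have hedge : ∀ u w : U, R u w →
      GadEdge (gadAdj R) (gadLab R) (Sum.inl u) (Sum.inl w) := by
    intro u w h
    exact ⟨Sum.inr (⟨(u, w), h⟩, false), Sum.inr (⟨(u, w), h⟩, true), rfl, rfl, rfl, rfl,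
      Or.inl ⟨rfl, rfl⟩, ⟨rfl, by decide⟩, Or.inr ⟨rfl, rfl⟩⟩
  refine ⟨?_, ⟨?_, ?_, ?_⟩, ?_, ?_⟩
  · -- phi1
    intro v
    rcases v with u | ⟨e, b⟩
    · exact Or.inl ⟨rfl, rfl, rfl⟩
    · cases b
      · exact Or.inr (Or.inl ⟨rfl, rfl, rfl⟩)
      · exact Or.inr (Or.inr ⟨rfl, rfl, rfl⟩)
  · -- phi2 for P2 nodes
    intro v hv
    rcases v with u | ⟨e, b⟩
    · exact absurd hv Bool.false_ne_true
    cases b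
    · refine ⟨?_, ?_, ?_⟩
      · rw [Nat.card_coe_set_eq, hnbF e]
        exact Set.ncard_pair Sum.inl_ne_inr
      · rw [Nat.card_coe_set_eq, hAF e] ; exact Set.ncard_singleton _
      · rw [Nat.card_coe_set_eq, hCF e] ; exact Set.ncard_singleton _
    · exact absurd hv Bool.false_ne_true
  · -- phi2 for P3 nodes
    intro v hv
    rcases v with u | ⟨e, b⟩
    · exact absurd hv Bool.false_ne_true
    cases b
    · exact absurd hv Bool.false_ne_true
    · refine ⟨?_, ?_, ?_⟩
      · rw [Nat.card_coe_set_eq, hnbT e]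
        exact Set.ncard_pair Sum.inl_ne_inr
      · rw [Nat.card_coe_set_eq, hAT e] ; exact Set.ncard_singleton _
      · rw [Nat.card_coe_set_eq, hBT e] ; exact Set.ncard_singleton _
  · -- no two P1 adjacent
    intro u v hu hv hE
    rcases u with u | ⟨e, b⟩
    · rcases v with w | ⟨e', b'⟩
      · exact hE
      · cases b' <;> exact absurd hv Bool.false_ne_true
    · cases b <;> exact absurd hu Bool.false_ne_true
  · -- psiCond
    intro i j hij hj
    rw [show Nat.card {v : GadV R | gadLab R v 0 = true} = n from hP1card] at hj
    obtain ⟨u, w, hju, hiw, huw⟩ := hlo5 i j hij hj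
    exact ⟨Sum.inl u, Sum.inl w, rfl, rfl, by rw [hN2]; exact hju, by rw [hN2]; exact hiw,
      hedge u w huw⟩
  · -- edge count
    have hP2card : Nat.card {v : GadV R | gadLab R v 1 = true} =
        Nat.card {p : U × U // R p.1 p.2} := by
      apply Nat.card_congr
      refine (Equiv.ofBijective (fun e : {p : U × U // R p.1 p.2} =>
        (⟨Sum.inr (e, false), rfl⟩ : {v : GadV R // gadLab R v 1 = true})) ⟨?_, ?_⟩).symm
      · intro a b h
        have h' := congrArg Subtype.val h
        injection h' with h2
        exact congrArg Prod.fst h2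
      · rintro ⟨v, hv⟩
        rcases v with u | ⟨e, b⟩
        · exact absurd hv Bool.false_ne_true
        cases b
        · exact ⟨e, rfl⟩
        · exact absurd hv Bool.false_ne_true
    have hEdges : Nat.card {p : U × U // R p.1 p.2} = ∑ u : U, Nat.card {w | R u w} := by
      rw [Nat.card_congr (Equiv.subtypeProdEquivSigmaSubtype (fun a b => R a b))]
      rw [Nat.card_eq_fintype_card, Fintype.card_sigma]
      apply Finset.sum_congr rfl
      intro u _
      rw [Nat.card_eq_fintype_card]
      apply Fintype.card_congr
      exact Equiv.subtypeEquivRight (fun w => Iff.rfl)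
    have hsum : ∑ u : U, Nat.card {w | R u w} = ∑ k ∈ Finset.range n, k := by
      have h1 : ∀ u : U, Nat.card {w | R u w} = ((g u : Fin n) : ℕ) := fun u => rfl
      calc ∑ u : U, Nat.card {w | R u w} = ∑ u : U, ((g u : Fin n) : ℕ) :=
            Finset.sum_congr rfl (fun u _ => h1 u)
        _ = ∑ i : Fin n, (i : ℕ) :=
            Fintype.sum_equiv (Equiv.ofBijective g hgbij) _ _ (fun u => rfl)
        _ = ∑ k ∈ Finset.range n, k := Fin.sum_univ_eq_sum_range (fun k => k) n
    rw [hP1card, hP2card, hEdges, hsum]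
    have := Finset.sum_range_id_mul_two n
    omega

noncomputable def pk {V : Type} [Nonempty V] (E : V → V → Prop) (lab : V → Fin 3 → Bool) (i : Fin 3)
    (v : V) : V :=
  Classical.epsilon fun w => E v w ∧ lab w i = true

lemma pk_spec {V : Type} [Nonempty V] (E : V → V → Prop) (lab : V → Fin 3 → Bool) (i : Fin 3) (v : V)
    (h : ∃ w, E v w ∧ lab w i = true) :
    E v (pk E lab i v) ∧ lab (pk E lab i v) i = true := Classical.epsilon_spec h

noncomputable def tgt {V : Type} [Nonempty V] (E : V → V → Prop) (lab : V → Fin 3 → Bool) (b : V) : V :=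
  pk E lab 0 (pk E lab 2 b)

lemma card_one_spec {V : Type} (S : Set V) (h : Nat.card S = 1) :
    (∃ a, a ∈ S) ∧ ∀ a b, a ∈ S → b ∈ S → a = b := by
  rw [Nat.card_coe_set_eq, Set.ncard_eq_one] at h
  obtain ⟨a, rfl⟩ := h
  exact ⟨⟨a, rfl⟩, by simp⟩

lemma label_clash {V : Type} {lab : V → Fin 3 → Bool} (h1 : phi1 lab) (v : V) (i j : Fin 3)
    (hne : i ≠ j) (hi : lab v i = true) (hj : lab v j = true) : False := by
  rcases h1 v with ⟨a, b, c⟩ | ⟨a, b, c⟩ | ⟨a, b, c⟩ <;> fin_cases i <;> fin_cases j <;>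
    simp_all

lemma complete {V : Type} [Fintype V] (E : V → V → Prop) (lab : V → Fin 3 → Bool)
    (hsym : ∀ u v, E u v → E v u) (hirr : ∀ v, ¬ E v v) (h : PhiG E lab) :
    IsGadLin E lab := by
  classical
  rcases isEmpty_or_nonempty V with hV | hV
  · refine ⟨V, ‹_›, fun _ _ => False, ⟨fun v => isEmptyElim v, fun u => isEmptyElim u,
      fun u => isEmptyElim u⟩, ?_⟩
    haveI : IsEmpty (GadV (fun (_ _ : V) => False)) := by
      unfold GadV
      haveI : IsEmpty {p : V × V // False} := ⟨fun p => p.prop⟩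
      infer_instance
    exact ⟨Equiv.equivOfIsEmpty _ _, fun u => isEmptyElim u, fun v => isEmptyElim v⟩
  obtain ⟨h1, ⟨h2B, h2C, h2A⟩, hpsi, hcount⟩ := h
  -- label exclusivity
  have hAnot : ∀ v, lab v 0 = true → lab v 1 = false ∧ lab v 2 = false := by
    intro v hv
    rcases h1 v with ⟨a, b, c⟩ | ⟨a, b, c⟩ | ⟨a, b, c⟩ <;>
      first | exact ⟨b, c⟩ | (rw [hv] at a; exact absurd a (by decide))
  have hBnot : ∀ v, lab v 1 = true → lab v 0 = false ∧ lab v 2 = false := by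
    intro v hv
    rcases h1 v with ⟨a, b, c⟩ | ⟨a, b, c⟩ | ⟨a, b, c⟩ <;>
      first | exact ⟨a, c⟩ | (rw [hv] at b; exact absurd b (by decide))
  have hCnot : ∀ v, lab v 2 = true → lab v 0 = false ∧ lab v 1 = false := by
    intro v hv
    rcases h1 v with ⟨a, b, c⟩ | ⟨a, b, c⟩ | ⟨a, b, c⟩ <;>
      first | exact ⟨a, b⟩ | (rw [hv] at c; exact absurd c (by decide))
  -- structure of P2 nodes
  have hB : ∀ b, lab b 1 = true →
      (E b (pk E lab 0 b) ∧ lab (pk E lab 0 b) 0 = true) ∧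
      (E b (pk E lab 2 b) ∧ lab (pk E lab 2 b) 2 = true) ∧
      (∀ w, E b w → lab w 0 = true → w = pk E lab 0 b) ∧
      (∀ w, E b w → lab w 2 = true → w = pk E lab 2 b) ∧
      (∀ w, E b w → w = pk E lab 0 b ∨ w = pk E lab 2 b) := by
    intro b hb
    obtain ⟨hc2, hcA, hcC⟩ := h2B b hb
    have sA := card_one_spec _ hcA
    have sC := card_one_spec _ hcC
    have pA := pk_spec E lab 0 b sA.1
    have pC := pk_spec E lab 2 b sC.1
    have uA : ∀ w, E b w → lab w 0 = true → w = pk E lab 0 b :=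
      fun w hw hl => sA.2 w _ ⟨hw, hl⟩ ⟨pA.1, pA.2⟩
    have uC : ∀ w, E b w → lab w 2 = true → w = pk E lab 2 b :=
      fun w hw hl => sC.2 w _ ⟨hw, hl⟩ ⟨pC.1, pC.2⟩
    refine ⟨pA, pC, uA, uC, ?_⟩
    have hne : pk E lab 0 b ≠ pk E lab 2 b := by
      intro hh
      have := pA.2
      rw [hh] at this
      rw [(hCnot _ pC.2).1] at this
      exact absurd this (by decide)
    have hpair : ({pk E lab 0 b, pk E lab 2 b} : Set V) = {w | E b w} := by
      apply Set.eq_of_subset_of_ncard_le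
      · rintro w (rfl | rfl)
        · exact pA.1
        · exact pC.1
      · rw [← Nat.card_coe_set_eq, hc2, Set.ncard_pair hne]
      · exact Set.toFinite _
    intro w hw
    have : w ∈ ({pk E lab 0 b, pk E lab 2 b} : Set V) := by
      rw [hpair]
      exact hw
    exact this
  -- structure of P3 nodes
  have hC : ∀ c, lab c 2 = true →
      (E c (pk E lab 0 c) ∧ lab (pk E lab 0 c) 0 = true) ∧
      (E c (pk E lab 1 c) ∧ lab (pk E lab 1 c) 1 = true) ∧
      (∀ w, E c w → lab w 0 = true → w = pk E lab 0 c) ∧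
      (∀ w, E c w → lab w 1 = true → w = pk E lab 1 c) ∧
      (∀ w, E c w → w = pk E lab 0 c ∨ w = pk E lab 1 c) := by
    intro c hc
    obtain ⟨hc2, hcA, hcBB⟩ := h2C c hc
    have sA := card_one_spec _ hcA
    have sB := card_one_spec _ hcBB
    have pA := pk_spec E lab 0 c sA.1
    have pB := pk_spec E lab 1 c sB.1
    have uA : ∀ w, E c w → lab w 0 = true → w = pk E lab 0 c :=
      fun w hw hl => sA.2 w _ ⟨hw, hl⟩ ⟨pA.1, pA.2⟩
    have uB : ∀ w, E c w → lab w 1 = true → w = pk E lab 1 c :=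
      fun w hw hl => sB.2 w _ ⟨hw, hl⟩ ⟨pB.1, pB.2⟩
    refine ⟨pA, pB, uA, uB, ?_⟩
    have hne : pk E lab 0 c ≠ pk E lab 1 c := by
      intro hh
      have := pA.2
      rw [hh] at this
      rw [(hBnot _ pB.2).1] at this
      exact absurd this (by decide)
    have hpair : ({pk E lab 0 c, pk E lab 1 c} : Set V) = {w | E c w} := by
      apply Set.eq_of_subset_of_ncard_le
      · rintro w (rfl | rfl)
        · exact pA.1
        · exact pB.1
      · rw [← Nat.card_coe_set_eq, hc2, Set.ncard_pair hne]
      · exact Set.toFinite _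
    intro w hw
    have : w ∈ ({pk E lab 0 c, pk E lab 1 c} : Set V) := by
      rw [hpair]
      exact hw
    exact this
  -- gadget paths are canonical
  have hpath : ∀ u b c w, GadPath E lab u b c w →
      lab b 1 = true ∧ pk E lab 0 b = u ∧ pk E lab 2 b = c ∧ pk E lab 0 c = w := by
    rintro u b c w ⟨hu0, hb1, hc2, hw0, hub, hbc, hcw⟩
    have hBb := hB b hb1
    have hCc := hC c hc2
    exact ⟨hb1, (hBb.2.2.1 u (hsym u b hub) hu0).symm, (hBb.2.2.2.1 c hbc hc2).symm,
      (hCc.2.2.1 w hcw hw0).symm⟩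
  -- N2 fibre characterisation
  have hfib : ∀ u, lab u 0 = true →
      {w | E u w ∧ lab w 1 = true} = {b | lab b 1 = true ∧ pk E lab 0 b = u} := by
    intro u hu
    ext b
    constructor
    · rintro ⟨hE, hb1⟩
      exact ⟨hb1, ((hB b hb1).2.2.1 u (hsym u b hE) hu).symm⟩
    · rintro ⟨hb1, hpk⟩
      exact ⟨hsym b u (hpk ▸ (hB b hb1).1.1), hb1⟩
  have hfibcard : ∀ u, lab u 0 = true →
      Nat.card {b | lab b 1 = true ∧ pk E lab 0 b = u} = N2 E lab u := by
    intro u hu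
    rw [N2, ← hfib u hu]
  -- gadget edge characterisation
  have hge : ∀ u w, GadEdge E lab u w ↔
      ∃ b, lab b 1 = true ∧ pk E lab 0 b = u ∧ tgt E lab b = w := by
    intro u w
    constructor
    · rintro ⟨b, c, hp⟩
      obtain ⟨hb1, e1, e2, e3⟩ := hpath _ _ _ _ hp
      refine ⟨b, hb1, e1, ?_⟩
      rw [tgt, e2, e3]
    · rintro ⟨b, hb1, h1, h2⟩
      have hBb := hB b hb1
      have hc2 : lab (pk E lab 2 b) 2 = true := hBb.2.1.2
      have hCc := hC _ hc2
      refine ⟨b, pk E lab 2 b, ?_, hb1, hc2, ?_, ?_, hBb.2.1.1, ?_⟩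
      · rw [← h1]
        exact hBb.1.2
      · rw [← h2, tgt]
        exact hCc.1.2
      · exact hsym b u (h1 ▸ hBb.1.1)
      · rw [← h2, tgt]
        exact hCc.1.1
  by_cases hn2 : Nat.card {v : V | lab v 0 = true} ≤ 1
  · -- degenerate case: at most one P1 node, so no other nodes at all
    have hzero : Nat.card {v : V | lab v 0 = true} *
        (Nat.card {v : V | lab v 0 = true} - 1) = 0 := by
      interval_cases (Nat.card {v : V | lab v 0 = true}) <;> simp
    have hBzero : Nat.card {v : V | lab v 1 = true} = 0 := by omega
    have hBempty : ∀ v, lab v 1 = true → False := by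
      intro v hv
      rw [Nat.card_coe_set_eq, Set.ncard_eq_zero (Set.toFinite _)] at hBzero
      have : v ∈ {v : V | lab v 1 = true} := hv
      rw [hBzero] at this
      exact this
    have hCempty : ∀ v, lab v 2 = true → False := by
      intro v hv
      obtain ⟨-, -, hc⟩ := h2C v hv
      obtain ⟨⟨b, hb⟩, -⟩ := card_one_spec _ hc
      exact hBempty b hb.2
    have hAll : ∀ v, lab v 0 = true := by
      intro v
      rcases h1 v with ⟨a, -, -⟩ | ⟨-, b, -⟩ | ⟨-, -, c⟩
      · exact a
      · exact absurd b (by intro hh; exact hBempty v hh)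
      · exact absurd c (by intro hh; exact hCempty v hh)
    have hsub : Subsingleton {v : V | lab v 0 = true} := by
      rwa [← Finite.card_le_one_iff_subsingleton]
    refine ⟨{v : V // lab v 0 = true}, inferInstance, fun _ _ => False,
      ⟨fun v hv => hv, fun _ _ _ hv => hv.elim, fun u w hne => absurd ?_ hne⟩, ?_⟩
    · exact hsub.elim u w
    · set R : {v : V // lab v 0 = true} → {v : V // lab v 0 = true} → Prop :=
        fun _ _ => False with hR
      have hF : Function.Bijective
          (fun v : V => (Sum.inl ⟨v, hAll v⟩ : GadV R)) := by
        constructor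
        · intro a b hab
          exact congrArg Subtype.val (Sum.inl_injective hab)
        · rintro (u | ⟨e, b⟩)
          · exact ⟨u.val, congrArg Sum.inl (Subtype.ext rfl)⟩
          · exact absurd e.prop (by intro hh; exact hh)
      refine ⟨Equiv.ofBijective _ hF, ?_, ?_⟩
      · intro u v
        constructor
        · intro hE
          exact absurd hE (h2A u v (hAll u) (hAll v))
        · intro hadj
          exact hadj.elim
      · intro v
        funext i
        fin_cases i
        · exact (hAll v).trans rfl
        · exact (hAnot v (hAll v)).1.trans rfl
        · exact (hAnot v (hAll v)).2.trans rfl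
  -- main case: at least two P1 nodes
  have hn : 2 ≤ Nat.card {v : V | lab v 0 = true} := by omega
  have hsurjN : ∀ k, k < Nat.card {v : V | lab v 0 = true} →
      ∃ u, lab u 0 = true ∧ N2 E lab u = k := by
    intro k hk
    rcases Nat.eq_zero_or_pos k with rfl | hkpos
    · obtain ⟨u, w, -, hw0, -, hiw, -⟩ := hpsi 0 1 (by omega) (by omega)
      exact ⟨w, hw0, hiw⟩
    · obtain ⟨u, w, hu0, -, hju, -, -⟩ := hpsi 0 k hkpos hk
      exact ⟨u, hu0, hju⟩
  have hrange : Set.range (fun u : {v : V | lab v 0 = true} => N2 E lab u.val) =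
      Set.Iio (Nat.card {v : V | lab v 0 = true}) := by
    symm
    apply Set.eq_of_subset_of_ncard_le
    · intro k hk
      obtain ⟨u, hu0, hN⟩ := hsurjN k hk
      exact ⟨⟨u, hu0⟩, hN⟩
    · calc (Set.range (fun u : {v : V | lab v 0 = true} => N2 E lab u.val)).ncard
          ≤ (Set.univ : Set {v : V | lab v 0 = true}).ncard := by
            rw [← Set.image_univ]
            exact Set.ncard_image_le (Set.toFinite _)
        _ = Nat.card {v : V | lab v 0 = true} := by rw [Set.ncard_univ]
        _ = (Set.Iio (Nat.card {v : V | lab v 0 = true})).ncard := by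
            rw [← Finset.coe_range, Set.ncard_coe_finset, Finset.card_range]
    · exact Set.toFinite _
  have hlt : ∀ u : {v : V | lab v 0 = true},
      N2 E lab u.val < Nat.card {v : V | lab v 0 = true} := by
    intro u
    have hm : N2 E lab u.val ∈
        Set.range (fun u : {v : V | lab v 0 = true} => N2 E lab u.val) := ⟨u, rfl⟩
    rw [hrange] at hm
    exact hm
  set g : {v : V | lab v 0 = true} → Fin (Nat.card {v : V | lab v 0 = true}) :=
    fun u => ⟨N2 E lab u.val, hlt u⟩ with hgdef
  have hgbij : Function.Bijective g := by
    rw [Fintype.bijective_iff_surjective_and_card]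
    constructor
    · rintro ⟨k, hk⟩
      obtain ⟨u, hu0, hN⟩ := hsurjN k hk
      exact ⟨⟨u, hu0⟩, Fin.ext hN⟩
    · rw [Fintype.card_fin]
      exact Nat.card_eq_fintype_card.symm
  have hNinj : ∀ u w : V, lab u 0 = true → lab w 0 = true →
      N2 E lab u = N2 E lab w → u = w := by
    intro u w hu hw hN
    exact congrArg Subtype.val
      (hgbij.1 (a₁ := ⟨u, hu⟩) (a₂ := ⟨w, hw⟩) (Fin.val_injective hN))
  -- main structural lemma about fibres and targets
  have hmain : ∀ u, lab u 0 = true → ∀ b, lab b 1 = true → pk E lab 0 b = u →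
      lab (tgt E lab b) 0 = true ∧ N2 E lab (tgt E lab b) < N2 E lab u ∧
      ∀ b', lab b' 1 = true → pk E lab 0 b' = u → tgt E lab b' = tgt E lab b → b' = b := by
    intro u hu
    have hjlt : N2 E lab u < Nat.card {v : V | lab v 0 = true} := hlt ⟨u, hu⟩
    have hWex : ∀ i : Fin (N2 E lab u),
        ∃ b : {b : V // lab b 1 = true ∧ pk E lab 0 b = u},
          lab (tgt E lab b.val) 0 = true ∧ N2 E lab (tgt E lab b.val) = i.val := by
      rintro ⟨i, hi⟩
      obtain ⟨u', w', hu0', hw0', hju', hiw', hgade⟩ := hpsi i (N2 E lab u) hi hjlt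
      have heq : u' = u := hNinj u' u hu0' hu hju'
      subst heq
      obtain ⟨b, hb1, hbu, hbt⟩ := (hge u' w').1 hgade
      refine ⟨⟨b, hb1, hbu⟩, ?_, ?_⟩
      · rw [hbt]
        exact hw0'
      · rw [hbt]
        exact hiw'
    choose W hW0 hWN using hWex
    have hWinj : Function.Injective W := by
      intro i i' hii
      exact Fin.ext (by rw [← hWN i, ← hWN i', hii])
    have hFcard : Fintype.card {b : V // lab b 1 = true ∧ pk E lab 0 b = u} = N2 E lab u := by
      rw [← Nat.card_eq_fintype_card]
      exact hfibcard u hu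
    have hWbij : Function.Bijective W := by
      rw [Fintype.bijective_iff_injective_and_card]
      exact ⟨hWinj, by rw [hFcard, Fintype.card_fin]⟩
    intro b hb1 hbu
    obtain ⟨i, hi⟩ := hWbij.2 ⟨b, hb1, hbu⟩
    have hWival : (W i).val = b := congrArg Subtype.val hi
    have htgt0 : lab (tgt E lab b) 0 = true := by
      rw [← hWival]
      exact hW0 i
    have htgtN : N2 E lab (tgt E lab b) = i.val := by
      rw [← hWival]
      exact hWN i
    refine ⟨htgt0, ?_, ?_⟩
    · rw [htgtN]
      exact i.isLt
    · intro b' hb1' hbu' htt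
      obtain ⟨i', hi'⟩ := hWbij.2 ⟨b', hb1', hbu'⟩
      have hWival' : (W i').val = b' := congrArg Subtype.val hi'
      have h1' : N2 E lab (tgt E lab b') = i'.val := by
        rw [← hWival']
        exact hWN i'
      have hii : i' = i := Fin.ext (by rw [← h1', htt, htgtN])
      rw [← hWival', hii, hWival]
  set R : {v : V | lab v 0 = true} → {v : V | lab v 0 = true} → Prop :=
    fun u w => GadEdge E lab u.val w.val with hRdef
  have hRiff : ∀ u w : {v : V | lab v 0 = true},
      R u w ↔ N2 E lab w.val < N2 E lab u.val := by
    intro u w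
    constructor
    · intro hr
      obtain ⟨b, hb1, hbu, hbt⟩ := (hge u.val w.val).1 hr
      have hm := (hmain u.val u.prop b hb1 hbu).2.1
      rw [hbt] at hm
      exact hm
    · intro hlt'
      obtain ⟨u', w', hu0', hw0', hju', hiw', hgade⟩ :=
        hpsi (N2 E lab w.val) (N2 E lab u.val) hlt' (hlt u)
      have heq1 : u' = u.val := hNinj u' u.val hu0' u.prop hju'
      have heq2 : w' = w.val := hNinj w' w.val hw0' w.prop hiw'
      show GadEdge E lab u.val w.val
      rw [← heq1, ← heq2]
      exact hgade
  have hRslo : IsStrictLinearOrderRel R := by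
    refine ⟨?_, ?_, ?_⟩
    · intro v hv
      rw [hRiff] at hv
      exact lt_irrefl _ hv
    · intro u v w huv hvw
      rw [hRiff] at huv hvw ⊢
      exact lt_trans hvw huv
    · intro u w hne
      have hNne : N2 E lab u.val ≠ N2 E lab w.val :=
        fun hh => hne (Subtype.ext (hNinj _ _ u.prop w.prop hh))
      rcases lt_or_gt_of_ne hNne with hlt' | hlt'
      · right
        rw [hRiff]
        exact hlt'
      · left
        rw [hRiff]
        exact hlt'
  have hEmapdata : ∀ b : {b : V // lab b 1 = true},
      lab (pk E lab 0 b.val) 0 = true ∧ lab (tgt E lab b.val) 0 = true ∧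
        GadEdge E lab (pk E lab 0 b.val) (tgt E lab b.val) := by
    intro b
    have h0 := (hB b.val b.prop).1.2
    exact ⟨h0, (hmain _ h0 b.val b.prop rfl).1, (hge _ _).2 ⟨b.val, b.prop, rfl, rfl⟩⟩
  set Emap : {b : V // lab b 1 = true} →
      {p : {v : V | lab v 0 = true} × {v : V | lab v 0 = true} // R p.1 p.2} :=
    fun b => ⟨(⟨pk E lab 0 b.val, (hEmapdata b).1⟩, ⟨tgt E lab b.val, (hEmapdata b).2.1⟩),
      (hEmapdata b).2.2⟩ with hEmapdef
  have hEmapbij : Function.Bijective Emap := by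
    constructor
    · intro b b' hbb
      have hcomp1 : pk E lab 0 b.val = pk E lab 0 b'.val :=
        congrArg (fun t => t.val.1.val) hbb
      have hcomp2 : tgt E lab b.val = tgt E lab b'.val :=
        congrArg (fun t => t.val.2.val) hbb
      exact Subtype.ext ((hmain _ ((hEmapdata b').1) b'.val b'.prop rfl).2.2
        b.val b.prop hcomp1 hcomp2)
    · rintro ⟨⟨u, w⟩, hr⟩
      obtain ⟨b, hb1, hbu, hbt⟩ := (hge u.val w.val).1 hr
      refine ⟨⟨b, hb1⟩, Subtype.ext (Prod.ext ?_ ?_)⟩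
      · exact Subtype.ext hbu
      · exact Subtype.ext hbt
  set eE := Equiv.ofBijective Emap hEmapbij with heEdef
  have hE1 : ∀ e : {p : {v : V | lab v 0 = true} × {v : V | lab v 0 = true} // R p.1 p.2},
      pk E lab 0 (eE.symm e).val = (e.val.1 : V) :=
    fun e => congrArg (fun t => t.val.1.val) (eE.apply_symm_apply e)
  have hE2 : ∀ e : {p : {v : V | lab v 0 = true} × {v : V | lab v 0 = true} // R p.1 p.2},
      tgt E lab (eE.symm e).val = (e.val.2 : V) :=
    fun e => congrArg (fun t => t.val.2.val) (eE.apply_symm_apply e)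
  have hclash : ∀ (v : V) (i j : Fin 3), i ≠ j → lab v i = true → lab v j = true → False :=
    label_clash h1
  have hpk2inj : ∀ b b', lab b 1 = true → lab b' 1 = true →
      pk E lab 2 b = pk E lab 2 b' → b = b' := by
    intro b b' hb hb' hh
    have hc2 : lab (pk E lab 2 b) 2 = true := (hB b hb).2.1.2
    have e1 : b = pk E lab 1 (pk E lab 2 b) :=
      (hC _ hc2).2.2.2.1 b (hsym b _ (hB b hb).2.1.1) hb
    have e2 : b' = pk E lab 1 (pk E lab 2 b) := by
      rw [hh]
      exact (hC _ (hh ▸ hc2)).2.2.2.1 b' (hsym b' _ (hB b' hb').2.1.1) hb'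
    rw [e1, e2]
  set F : GadV R → V := fun x => Sum.elim (fun u => u.val)
    (fun p => if p.2 = true then pk E lab 2 (eE.symm p.1).val else (eE.symm p.1).val) x
    with hFdef
  have hFbij : Function.Bijective F := by
    constructor
    · rintro (u | ⟨e, bb⟩) (u' | ⟨e', bb'⟩) hxy
      · exact congrArg Sum.inl (Subtype.ext hxy)
      · exfalso
        cases bb'
        · replace hxy : u.val = (eE.symm e').val := hxy
          exact hclash _ 0 1 (by decide) (hxy ▸ u.prop) (eE.symm e').prop
        · replace hxy : u.val = pk E lab 2 (eE.symm e').val := hxy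
          exact hclash _ 0 2 (by decide) (hxy ▸ u.prop)
            ((hB _ (eE.symm e').prop).2.1.2)
      · exfalso
        cases bb
        · replace hxy : (eE.symm e).val = u'.val := hxy
          exact hclash _ 0 1 (by decide) (hxy.symm ▸ u'.prop) (eE.symm e).prop
        · replace hxy : pk E lab 2 (eE.symm e).val = u'.val := hxy
          exact hclash _ 0 2 (by decide) (hxy.symm ▸ u'.prop)
            ((hB _ (eE.symm e).prop).2.1.2)
      · cases bb <;> cases bb'
        · replace hxy : (eE.symm e).val = (eE.symm e').val := hxy
          have he : e = e' := eE.symm.injective (Subtype.ext hxy)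
          rw [he]
        · replace hxy : (eE.symm e).val = pk E lab 2 (eE.symm e').val := hxy
          exfalso
          have h2' := (hB _ (eE.symm e').prop).2.1.2
          rw [← hxy] at h2'
          exact hclash _ 1 2 (by decide) (eE.symm e).prop h2'
        · replace hxy : pk E lab 2 (eE.symm e).val = (eE.symm e').val := hxy
          exfalso
          have h2' := (hB _ (eE.symm e).prop).2.1.2
          rw [hxy] at h2'
          exact hclash _ 1 2 (by decide) (eE.symm e').prop h2'
        · replace hxy : pk E lab 2 (eE.symm e).val = pk E lab 2 (eE.symm e').val := hxy
          have he : e = e' := eE.symm.injective (Subtype.ext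
            (hpk2inj _ _ (eE.symm e).prop (eE.symm e').prop hxy))
          rw [he]
    · intro v
      rcases h1 v with ⟨hv0, -, -⟩ | ⟨-, hv1, -⟩ | ⟨-, -, hv2⟩
      · exact ⟨Sum.inl ⟨v, hv0⟩, rfl⟩
      · refine ⟨Sum.inr (eE ⟨v, hv1⟩, false), ?_⟩
        show (eE.symm (eE ⟨v, hv1⟩)).val = v
        rw [Equiv.symm_apply_apply]
      · have hb1 : lab (pk E lab 1 v) 1 = true := (hC v hv2).2.1.2
        have hpkv : pk E lab 2 (pk E lab 1 v) = v :=
          ((hB _ hb1).2.2.2.1 v (hsym v _ (hC v hv2).2.1.1) hv2).symm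
        refine ⟨Sum.inr (eE ⟨pk E lab 1 v, hb1⟩, true), ?_⟩
        show pk E lab 2 (eE.symm (eE ⟨pk E lab 1 v, hb1⟩)).val = v
        rw [Equiv.symm_apply_apply]
        exact hpkv
  have hlabF : ∀ x : GadV R, gadLab R x = lab (F x) := by
    rintro (u | ⟨e, bb⟩)
    · funext i
      fin_cases i
      · exact u.prop.symm
      · exact (hAnot _ u.prop).1.symm
      · exact (hAnot _ u.prop).2.symm
    · cases bb
      · funext i
        fin_cases i
        · exact (hBnot _ (eE.symm e).prop).1.symm
        · exact ((eE.symm e).prop).symm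
        · exact (hBnot _ (eE.symm e).prop).2.symm
      · have hc2 : lab (pk E lab 2 (eE.symm e).val) 2 = true := (hB _ (eE.symm e).prop).2.1.2
        funext i
        fin_cases i
        · exact (hCnot _ hc2).1.symm
        · exact (hCnot _ hc2).2.symm
        · exact hc2.symm
  have hadj : ∀ x y : GadV R, gadAdj R x y ↔ E (F x) (F y) := by
    rintro (u | ⟨e, bb⟩) (u' | ⟨e', bb'⟩)
    · show False ↔ E u.val u'.val
      exact ⟨fun hh => hh.elim, fun hE => absurd hE (h2A _ _ u.prop u'.prop)⟩
    · cases bb'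
      · show (false = false ∧ e'.val.1 = u) ∨ (false = true ∧ e'.val.2 = u) ↔
          E u.val (eE.symm e').val
        constructor
        · rintro (⟨-, hh⟩ | ⟨hcontra, -⟩)
          · have hpE : pk E lab 0 (eE.symm e').val = u.val := by
              rw [hE1 e', hh]
            exact hsym _ _ (hpE ▸ (hB _ (eE.symm e').prop).1.1)
          · exact absurd hcontra (by decide)
        · intro hE
          left
          refine ⟨rfl, ?_⟩
          have hh : u.val = pk E lab 0 (eE.symm e').val :=
            (hB _ (eE.symm e').prop).2.2.1 u.val (hsym _ _ hE) u.prop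
          exact Subtype.ext ((hE1 e').symm.trans hh.symm)
      · show (true = false ∧ e'.val.1 = u) ∨ (true = true ∧ e'.val.2 = u) ↔
          E u.val (pk E lab 2 (eE.symm e').val)
        have hc2 : lab (pk E lab 2 (eE.symm e').val) 2 = true := (hB _ (eE.symm e').prop).2.1.2
        constructor
        · rintro (⟨hcontra, -⟩ | ⟨-, hh⟩)
          · exact absurd hcontra (by decide)
          · have hpE : pk E lab 0 (pk E lab 2 (eE.symm e').val) = u.val := by
              rw [show pk E lab 0 (pk E lab 2 (eE.symm e').val) = tgt E lab (eE.symm e').val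
                from rfl, hE2 e', hh]
            exact hsym _ _ (hpE ▸ (hC _ hc2).1.1)
        · intro hE
          right
          refine ⟨rfl, ?_⟩
          have hh : u.val = pk E lab 0 (pk E lab 2 (eE.symm e').val) :=
            (hC _ hc2).2.2.1 u.val (hsym _ _ hE) u.prop
          exact Subtype.ext ((hE2 e').symm.trans hh.symm)
    · cases bb
      · show (false = false ∧ e.val.1 = u') ∨ (false = true ∧ e.val.2 = u') ↔
          E (eE.symm e).val u'.val
        constructor
        · rintro (⟨-, hh⟩ | ⟨hcontra, -⟩)
          · have hpE : pk E lab 0 (eE.symm e).val = u'.val := by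
              rw [hE1 e, hh]
            exact hpE ▸ (hB _ (eE.symm e).prop).1.1
          · exact absurd hcontra (by decide)
        · intro hE
          left
          refine ⟨rfl, ?_⟩
          have hh : u'.val = pk E lab 0 (eE.symm e).val :=
            (hB _ (eE.symm e).prop).2.2.1 u'.val hE u'.prop
          exact Subtype.ext ((hE1 e).symm.trans hh.symm)
      · show (true = false ∧ e.val.1 = u') ∨ (true = true ∧ e.val.2 = u') ↔
          E (pk E lab 2 (eE.symm e).val) u'.val
        have hc2 : lab (pk E lab 2 (eE.symm e).val) 2 = true := (hB _ (eE.symm e).prop).2.1.2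
        constructor
        · rintro (⟨hcontra, -⟩ | ⟨-, hh⟩)
          · exact absurd hcontra (by decide)
          · have hpE : pk E lab 0 (pk E lab 2 (eE.symm e).val) = u'.val := by
              rw [show pk E lab 0 (pk E lab 2 (eE.symm e).val) = tgt E lab (eE.symm e).val
                from rfl, hE2 e, hh]
            exact hpE ▸ (hC _ hc2).1.1
        · intro hE
          right
          refine ⟨rfl, ?_⟩
          have hh : u'.val = pk E lab 0 (pk E lab 2 (eE.symm e).val) :=
            (hC _ hc2).2.2.1 u'.val hE u'.prop
          exact Subtype.ext ((hE2 e).symm.trans hh.symm)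
    · cases bb <;> cases bb'
      · show (e = e' ∧ false ≠ false) ↔ E (eE.symm e).val (eE.symm e').val
        constructor
        · rintro ⟨-, hne⟩
          exact absurd rfl hne
        · intro hE
          exfalso
          rcases (hB _ (eE.symm e).prop).2.2.2.2 _ hE with hh | hh
          · exact hclash _ 1 0 (by decide) (eE.symm e').prop
              (hh ▸ (hB _ (eE.symm e).prop).1.2)
          · exact hclash _ 1 2 (by decide) (eE.symm e').prop
              (hh ▸ (hB _ (eE.symm e).prop).2.1.2)
      · show (e = e' ∧ false ≠ true) ↔ E (eE.symm e).val (pk E lab 2 (eE.symm e').val)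
        constructor
        · rintro ⟨rfl, -⟩
          exact (hB _ (eE.symm e).prop).2.1.1
        · intro hE
          rcases (hB _ (eE.symm e).prop).2.2.2.2 _ hE with hh | hh
          · exfalso
            exact hclash _ 2 0 (by decide) ((hB _ (eE.symm e').prop).2.1.2)
              (hh ▸ (hB _ (eE.symm e).prop).1.2)
          · have he : e' = e := eE.symm.injective (Subtype.ext
              (hpk2inj _ _ (eE.symm e').prop (eE.symm e).prop hh))
            exact ⟨he.symm, by decide⟩
      · show (e = e' ∧ true ≠ false) ↔ E (pk E lab 2 (eE.symm e).val) (eE.symm e').val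
        constructor
        · rintro ⟨rfl, -⟩
          exact hsym _ _ (hB _ (eE.symm e).prop).2.1.1
        · intro hE
          rcases (hB _ (eE.symm e').prop).2.2.2.2 _ (hsym _ _ hE) with hh | hh
          · exfalso
            exact hclash _ 2 0 (by decide) ((hB _ (eE.symm e).prop).2.1.2)
              (hh ▸ (hB _ (eE.symm e').prop).1.2)
          · have he : e = e' := eE.symm.injective (Subtype.ext
              (hpk2inj _ _ (eE.symm e).prop (eE.symm e').prop hh))
            exact ⟨he, by decide⟩
      · show (e = e' ∧ true ≠ true) ↔
          E (pk E lab 2 (eE.symm e).val) (pk E lab 2 (eE.symm e').val)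
        constructor
        · rintro ⟨-, hne⟩
          exact absurd rfl hne
        · intro hE
          exfalso
          have hc2 : lab (pk E lab 2 (eE.symm e).val) 2 = true :=
            (hB _ (eE.symm e).prop).2.1.2
          rcases (hC _ hc2).2.2.2.2 _ hE with hh | hh
          · exact hclash _ 2 0 (by decide) ((hB _ (eE.symm e').prop).2.1.2)
              (hh ▸ (hC _ hc2).1.2)
          · exact hclash _ 2 1 (by decide) ((hB _ (eE.symm e').prop).2.1.2)
              (hh ▸ (hC _ hc2).2.1.2)
  set G := Equiv.ofBijective F hFbij with hGdef
  refine ⟨{v : V | lab v 0 = true}, Fintype.ofFinite _, R, hRslo, G.symm, ?_, ?_⟩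
  · intro u v
    exact Iff.symm ((hadj (G.symm u) (G.symm v)).trans (by
      rw [show F (G.symm u) = u from G.apply_symm_apply u,
        show F (G.symm v) = v from G.apply_symm_apply v]))
  · intro v
    rw [hlabF (G.symm v), show F (G.symm v) = v from G.apply_symm_apply v]

end Main

/-- there is an undirected ACR-GNN node classifier which accepts a node of a
finite undirected labelled graph of dimension 3 iff the graph is isomorphic to the
gadgetisation of a strict linear order. -/
theorem stmt17 :
    ∃ (dout : ℕ) (net : UACRNet 3 dout) (cls : (Fin dout → ℝ) → Bool),
      ∀ (V : Type) [Fintype V] (E : V → V → Prop),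
        (∀ u v, E u v → E v u) → (∀ v, ¬ E v v) →
        ∀ (lab : V → Fin 3 → Bool) (v : V),
          (cls (UACRNet.eval E net (fun w => boolVec (lab w)) v) = true ↔
            IsGadLin E lab) := by
  refine ⟨1, theNet, theCls, ?_⟩
  intro V _ E hsym hirr lab v
  rw [eval_theNet]
  simp only [theCls, dec_enc, decide_eq_true_eq]
  constructor
  · intro h
    exact complete E lab hsym hirr ((express E lab).1 h)
  · rintro ⟨U, instU, R, hR, hiso⟩
    rw [invar E lab (gadAdj R) (gadLab R) hiso, express]
    exact sound R hR
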